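/- Let A be a real n×n matrix and let x : ℝ → ℝⁿ, w : ℝ → ℝ be twice differentiable functions satisfying x''(t) = w'(t) • (A · x'(t)) and w''(t) = 0 for all t. Then w(t) = w(0) + w'(0)·t and x'(t) = exp((w(t) − w(0)) • A) · x'(0) for all t; i.e. every geodesic of the canonical connection is obtained by integrating a one-parameter subgroup direction. -/

import Mathlib

open NormedSpace

attribute [local instance] Matrix.linftyOpNormedRing Matrix.linftyOpNormedAlgebra

/-- Geodesics of the canonical connection in normal coordinates are translates of
one-parameter subgroups: for the system `ẍ = ẇ • (A ẋ)`, `ẅ = 0` one has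
`w(t) = w(0) + ẇ(0)·t` and `ẋ(t) = exp((w(t) − w(0)) • A) · ẋ(0)`. -/
theorem geodesic_one_parameter_subgroup {n : ℕ} (A : Matrix (Fin n) (Fin n) ℝ)
    (x : ℝ → Fin n → ℝ) (w : ℝ → ℝ)
    (hx : Differentiable ℝ x) (hx' : Differentiable ℝ (deriv x))
    (hw : Differentiable ℝ w) (hw' : Differentiable ℝ (deriv w))
    (hgeo : ∀ t : ℝ, deriv (deriv x) t = deriv w t • A.mulVec (deriv x t))
    (hgeow : ∀ t : ℝ, deriv (deriv w) t = 0) :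
    ∀ t : ℝ, w t = w 0 + deriv w 0 * t ∧
      deriv x t = (exp ((w t - w 0) • A)).mulVec (deriv x 0) := by
  set c := deriv w 0 with hc
  -- deriv w is constant
  have hwc : ∀ t : ℝ, deriv w t = c := fun t =>
    is_const_of_deriv_eq_zero hw' hgeow t 0
  -- w is affine
  have hwaff : ∀ t : ℝ, w t = w 0 + c * t := by
    intro t
    have hd : Differentiable ℝ (fun s : ℝ => w s - c * s) :=
      hw.sub (differentiable_const c |>.mul differentiable_id)
    have hz : ∀ s : ℝ, deriv (fun s : ℝ => w s - c * s) s = 0 := by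
      intro s
      have h1 : HasDerivAt (fun s : ℝ => w s - c * s) (deriv w s - c) s := by
        exact (hw s).hasDerivAt.sub (((hasDerivAt_id' s).const_mul c).congr_deriv (mul_one c))
      rw [h1.deriv, hwc s, sub_self]
    have := is_const_of_deriv_eq_zero hd hz t 0
    simp at this
    linarith
  -- the flow matrix
  set E : ℝ → Matrix (Fin n) (Fin n) ℝ := fun s => exp ((-(c * s)) • A) with hE
  -- mulVec as a continuous bilinear map
  let L : Matrix (Fin n) (Fin n) ℝ →ₗ[ℝ] ((Fin n → ℝ) →L[ℝ] (Fin n → ℝ)) :=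
    { toFun := fun M => (Matrix.mulVecLin M).toContinuousLinearMap
      map_add' := by intro M N; ext v; simp [Matrix.add_mulVec]
      map_smul' := by intro r M; ext v; simp [Matrix.smul_mulVec] }
  let φ : Matrix (Fin n) (Fin n) ℝ →L[ℝ] ((Fin n → ℝ) →L[ℝ] (Fin n → ℝ)) :=
    L.toContinuousLinearMap
  have hφ : ∀ M v, φ M v = M.mulVec v := fun M v => rfl
  -- derivative of E
  have hEderiv : ∀ t : ℝ, HasDerivAt E ((-c) • (E t * A)) t := by
    intro t
    have h1 : HasDerivAt (fun s : ℝ => exp (s • A))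
        (exp ((-(c * t)) • A) * A) (-(c * t)) :=
      hasDerivAt_exp_smul_const A (-(c * t))
    have h2 : HasDerivAt (fun s : ℝ => -(c * s)) (-c) t := by
      exact (((hasDerivAt_id' t).const_mul c).congr_deriv (mul_one c)).neg
    exact h1.scomp t h2
  -- E t • deriv x t is constant
  have hconst : ∀ t : ℝ, (E t).mulVec (deriv x t) = deriv x 0 := by
    intro t
    have hdiff : ∀ s : ℝ, HasDerivAt (fun s => (E s).mulVec (deriv x s)) 0 s := by
      intro s
      have hc1 : HasDerivAt (fun s => φ (E s)) (φ ((-c) • (E s * A))) s :=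
        (φ.hasFDerivAt.comp_hasDerivAt s (hEderiv s))
      have hu : HasDerivAt (deriv x) (c • A.mulVec (deriv x s)) s := by
        have := (hx' s).hasDerivAt
        rwa [hgeo s, hwc s] at this
      have := hc1.clm_apply hu
      simp only [hφ] at this
      refine this.congr_deriv ?_
      rw [Matrix.smul_mulVec, Matrix.mulVec_smul, Matrix.mulVec_mulVec]
      module
    have := is_const_of_deriv_eq_zero (fun s => (hdiff s).differentiableAt)
      (fun s => (hdiff s).deriv) t 0
    rw [this]
    simp [hE, exp_zero]
  -- conclude
  intro t
  refine ⟨hwaff t, ?_⟩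
  have hcomm : Commute ((c * t) • A) ((-(c * t)) • A) :=
    ((Commute.refl A).smul_left _).smul_right _
  have hinv : exp ((c * t) • A) * E t = 1 := by
    rw [hE]
    beta_reduce
    refine (exp_add_of_commute hcomm).symm.trans ?_
    simp
  have := congrArg (fun v => (exp ((c * t) • A)).mulVec v) (hconst t)
  simp only [Matrix.mulVec_mulVec, hinv, Matrix.one_mulVec] at this
  rw [hwaff t]
  simpa [mul_comm] using this
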